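/- Let a, b ∈ ℝ and define γ : ℤ → ℝ by γ(0) = 1, γ(k) = a for |k| = 1, γ(k) = b for |k| = 2, and γ(k) = 0 for |k| ≥ 3. Then γ is positive definite (i.e., for every m ∈ ℕ and all c₀, …, c_m ∈ ℂ one has Σ_{k,l=0}^{m} c_k · conj(c_l) · γ(k − l) ≥ 0) if and only if (a, b) ∈ 𝒫 = 𝒫₁ ∪ 𝒫₂, where 𝒫₁ = {(a,b) ∈ ℝ² : a²/8 + (b − 1/4)² ≤ 1/16} and 𝒫₂ = {(a,b) ∈ ℝ² : a²/8 + (b − 1/4)² ≥ 1/16 and |a| − 1/2 ≤ b ≤ 1/6}. -/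

import Mathlib

set_option maxHeartbeats 1000000

open Complex
open scoped ComplexOrder


lemma exists_q (a b : ℝ)
    (hreg : a ^ 2 / 8 + (b - 1 / 4) ^ 2 ≤ 1 / 16 ∨
        (1 / 16 ≤ a ^ 2 / 8 + (b - 1 / 4) ^ 2 ∧ |a| - 1 / 2 ≤ b ∧ b ≤ 1 / 6)) :
    ∃ q0 q1 q2 : ℝ, q0 ^ 2 + q1 ^ 2 + q2 ^ 2 = 1 ∧ q0 * q1 + q1 * q2 = a ∧ q0 * q2 = b := by
  have hb2 : 0 ≤ 1 + 2 * b := by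
    rcases hreg with h | ⟨_, h, _⟩
    · nlinarith [sq_nonneg a]
    · have := abs_nonneg a; linarith
  have h4a : 4 * a ^ 2 ≤ (1 + 2 * b) ^ 2 := by
    rcases hreg with h | ⟨_, h, _⟩
    · nlinarith [sq_nonneg (3 * b - 1 / 2)]
    · have h' : |a| ≤ b + 1 / 2 := by linarith
      have := _root_.sq_abs a
      nlinarith [abs_nonneg a]
  obtain ⟨D, hDdef⟩ : ∃ D : ℝ, D = (1 + 2 * b) ^ 2 - 4 * a ^ 2 := ⟨_, rfl⟩
  have hD : 0 ≤ D := by rw [hDdef]; linarith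
  obtain ⟨r, hrdef⟩ : ∃ r : ℝ, r = Real.sqrt D := ⟨_, rfl⟩
  have hr2 : r ^ 2 = D := by rw [hrdef]; exact Real.sq_sqrt hD
  have hrnn : 0 ≤ r := by rw [hrdef]; exact Real.sqrt_nonneg _
  obtain ⟨S, hSdef⟩ : ∃ S : ℝ, S = ((1 + 2 * b) + r) / 2 := ⟨_, rfl⟩
  have hS0 : 0 ≤ S := by rw [hSdef]; positivity
  have hSle : S ≤ 1 + 2 * b := by
    have : r ≤ 1 + 2 * b := by nlinarith
    rw [hSdef]; linarith
  have hquad : a ^ 2 = S * (1 + 2 * b - S) := by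
    rw [hSdef]; field_simp; nlinarith
  have hS4b : 4 * b ≤ S := by
    rcases le_or_gt b (1/6) with hb6 | hb6
    · rw [hSdef]; nlinarith
    · have hell : a ^ 2 ≤ 4 * b - 8 * b ^ 2 := by
        rcases hreg with h | ⟨_, _, h6⟩
        · nlinarith
        · linarith
      have hDge : (6 * b - 1) ^ 2 ≤ D := by rw [hDdef]; nlinarith
      have : 6 * b - 1 ≤ r := by nlinarith
      rw [hSdef]; linarith
  clear hreg h4a hDdef
  obtain ⟨s, hsdef⟩ : ∃ s : ℝ, s = Real.sqrt S := ⟨_, rfl⟩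
  have hs2 : s ^ 2 = S := by rw [hsdef]; exact Real.sq_sqrt hS0
  have hsnn : 0 ≤ s := by rw [hsdef]; exact Real.sqrt_nonneg _
  obtain ⟨e, hedef⟩ : ∃ e : ℝ, e = Real.sqrt (S - 4 * b) := ⟨_, rfl⟩
  have he2 : e ^ 2 = S - 4 * b := by rw [hedef]; exact Real.sq_sqrt (by linarith)
  refine ⟨(s + e) / 2, a / s, (s - e) / 2, ?_, ?_, ?_⟩
  · -- sum of squares = 1
    have hq1 : (a / s) ^ 2 = 1 + 2 * b - S := by
      rcases eq_or_lt_of_le hS0 with hS | hS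
      · have hSz : S = 0 := hS.symm
        have ha0 : a = 0 := by nlinarith
        have hsz : s = 0 := by rw [hsdef, hSz, Real.sqrt_zero]
        have hb12 : 1 + 2 * b = 0 := by
          have : r = -(1 + 2*b) := by rw [hSdef] at hSz; linarith
          nlinarith
        simp [ha0, hsz, hSz, hb12]
      · have hsz : s ≠ 0 := by nlinarith
        rw [div_pow, hs2, eq_comm, eq_div_iff (by nlinarith)]
        nlinarith
    have h' : ((s+e)/2) ^ 2 + (a/s) ^ 2 + ((s-e)/2) ^ 2
        = (s^2 + e^2) / 2 + (a/s) ^ 2 := by ring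
    rw [h', hq1, hs2, he2]; ring
  · -- middle = a
    rcases eq_or_ne s 0 with hsz | hsz
    · have hSz : S = 0 := by rw [← hs2, hsz]; ring
      have ha0 : a = 0 := by nlinarith
      simp [hsz, ha0]
    · have h' : (s+e)/2 * (a/s) + (a/s) * ((s-e)/2) = (a/s) * s := by ring
      rw [h', div_mul_cancel₀ _ hsz]
  · -- product = b
    have h' : (s+e)/2 * ((s-e)/2) = (s^2 - e^2)/4 := by ring
    rw [h', hs2, he2]; ring

lemma forward_dir (a b : ℝ) (γ : ℤ → ℝ)
    (h0 : γ 0 = 1)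
    (h1 : ∀ k : ℤ, |k| = 1 → γ k = a)
    (h2 : ∀ k : ℤ, |k| = 2 → γ k = b)
    (h3 : ∀ k : ℤ, 3 ≤ |k| → γ k = 0)
    (q0 q1 q2 : ℝ)
    (hq : q0 ^ 2 + q1 ^ 2 + q2 ^ 2 = 1)
    (ha : q0 * q1 + q1 * q2 = a)
    (hb : q0 * q2 = b)
    (m : ℕ) (c : Fin (m + 1) → ℂ) :
    0 ≤ ∑ k : Fin (m + 1), ∑ l : Fin (m + 1),
          c k * (starRingEnd ℂ) (c l) * (γ (((k : ℕ) : ℤ) - ((l : ℕ) : ℤ)) : ℂ) := by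
  obtain ⟨qz, hqzdef⟩ : ∃ qz : ℤ → ℝ, qz = fun j =>
      if j = 0 then q0 else if j = 1 then q1 else if j = 2 then q2 else 0 := ⟨_, rfl⟩
  have hqzz : ∀ j : ℤ, j ≠ 0 → j ≠ 1 → j ≠ 2 → qz j = 0 := by
    intro j hj0 hj1 hj2; simp [hqzdef, hj0, hj1, hj2]
  -- key sum identity
  have hA : ∀ k l : ℕ, l ≤ m →
      (∑ t ∈ Finset.range (m + 3), qz ((t : ℤ) - k) * qz ((t : ℤ) - l))
        = γ ((k : ℤ) - (l : ℤ)) := by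
    intro k l hl
    have hsub : (Finset.range 3).image (fun j => l + j) ⊆ Finset.range (m + 3) := by
      intro t ht
      simp only [Finset.mem_image, Finset.mem_range] at ht ⊢
      omega
    rw [← Finset.sum_subset hsub (by
      intro t ht htn
      simp only [Finset.mem_image, Finset.mem_range] at ht htn
      have h' : ((t : ℤ) - l ≠ 0) ∧ ((t : ℤ) - l ≠ 1) ∧ ((t : ℤ) - l ≠ 2) := by
        refine ⟨fun h => htn ⟨0, by omega⟩, fun h => htn ⟨1, by omega⟩,
          fun h => htn ⟨2, by omega⟩⟩
      rw [hqzz _ h'.1 h'.2.1 h'.2.2, mul_zero])]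
    rw [Finset.sum_image (by intro x _ y _ h; simp only at h; omega)]
    obtain ⟨n, hn⟩ : ∃ n : ℤ, n = (k : ℤ) - l := ⟨_, rfl⟩
    have harg1 : ∀ j : ℕ, ((l + j : ℕ) : ℤ) - k = (j : ℤ) - n := by intro j; omega
    have harg2 : ∀ j : ℕ, ((l + j : ℕ) : ℤ) - l = (j : ℤ) := by intro j; omega
    have hexp : ∑ j ∈ Finset.range 3, qz (((l + j : ℕ) : ℤ) - k) * qz (((l + j : ℕ) : ℤ) - l)
        = qz (0 - n) * qz 0 + qz (1 - n) * qz 1 + qz (2 - n) * qz 2 := by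
      rw [Finset.sum_range_succ, Finset.sum_range_succ, Finset.sum_range_one,
        harg1 0, harg1 1, harg1 2, harg2 0, harg2 1, harg2 2]
      push_cast
      ring
    rw [hexp, show (k : ℤ) - l = n from hn.symm]
    rcases (by omega : n ≤ -3 ∨ 3 ≤ n ∨ (-2 ≤ n ∧ n ≤ 2)) with hc | hc | ⟨hc1, hc2⟩
    · rw [h3 n (le_abs.mpr (Or.inr (by linarith))), hqzz (0 - n) (by omega) (by omega) (by omega),
        hqzz (1 - n) (by omega) (by omega) (by omega),
        hqzz (2 - n) (by omega) (by omega) (by omega)]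
      ring
    · rw [h3 n (le_abs.mpr (Or.inl (by linarith))), hqzz (0 - n) (by omega) (by omega) (by omega),
        hqzz (1 - n) (by omega) (by omega) (by omega),
        hqzz (2 - n) (by omega) (by omega) (by omega)]
      ring
    · interval_cases n
      · rw [h2 (-2) (by decide)]; norm_num [hqzdef]; linear_combination hb
      · rw [h1 (-1) (by decide)]; norm_num [hqzdef]; linear_combination ha
      · rw [h0]; norm_num [hqzdef]; linear_combination hq
      · rw [h1 1 (by decide)]; norm_num [hqzdef]; linear_combination ha
      · rw [h2 2 (by decide)]; norm_num [hqzdef]; linear_combination hb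
  -- the filtered signal
  obtain ⟨d, hddef⟩ : ∃ d : ℕ → ℂ, d = fun (t : ℕ) =>
      ∑ k : Fin (m + 1), ((qz ((t : ℤ) - k) : ℝ) : ℂ) * c k := ⟨_, rfl⟩
  have hdt : ∀ t : ℕ, d t * (starRingEnd ℂ) (d t)
      = ∑ k : Fin (m + 1), ∑ l : Fin (m + 1),
          ((qz ((t : ℤ) - k) * qz ((t : ℤ) - l) : ℝ) : ℂ) * (c k * (starRingEnd ℂ) (c l)) := by
    intro t
    rw [hddef]
    simp only [map_sum, map_mul, Complex.conj_ofReal]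
    rw [Finset.sum_mul_sum]
    refine Finset.sum_congr rfl fun k _ => Finset.sum_congr rfl fun l _ => ?_
    push_cast
    ring
  have key : ∑ t ∈ Finset.range (m + 3), d t * (starRingEnd ℂ) (d t)
      = ∑ k : Fin (m + 1), ∑ l : Fin (m + 1),
          c k * (starRingEnd ℂ) (c l) * (γ (((k : ℕ) : ℤ) - ((l : ℕ) : ℤ)) : ℂ) :=
    calc ∑ t ∈ Finset.range (m + 3), d t * (starRingEnd ℂ) (d t)
        = ∑ t ∈ Finset.range (m + 3), ∑ k : Fin (m + 1), ∑ l : Fin (m + 1),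
            ((qz ((t : ℤ) - k) * qz ((t : ℤ) - l) : ℝ) : ℂ) * (c k * (starRingEnd ℂ) (c l)) :=
          Finset.sum_congr rfl fun t _ => hdt t
      _ = ∑ k : Fin (m + 1), ∑ t ∈ Finset.range (m + 3), ∑ l : Fin (m + 1),
            ((qz ((t : ℤ) - k) * qz ((t : ℤ) - l) : ℝ) : ℂ) * (c k * (starRingEnd ℂ) (c l)) :=
          Finset.sum_comm
      _ = ∑ k : Fin (m + 1), ∑ l : Fin (m + 1), ∑ t ∈ Finset.range (m + 3),
            ((qz ((t : ℤ) - k) * qz ((t : ℤ) - l) : ℝ) : ℂ) * (c k * (starRingEnd ℂ) (c l)) :=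
          Finset.sum_congr rfl fun k _ => Finset.sum_comm
      _ = ∑ k : Fin (m + 1), ∑ l : Fin (m + 1),
          c k * (starRingEnd ℂ) (c l) * (γ (((k : ℕ) : ℤ) - ((l : ℕ) : ℤ)) : ℂ) := by
          refine Finset.sum_congr rfl fun k _ => Finset.sum_congr rfl fun l _ => ?_
          rw [← Finset.sum_mul, ← Complex.ofReal_sum,
            hA (k : ℕ) (l : ℕ) (Nat.lt_succ_iff.mp l.isLt), mul_comm]
  rw [← key]
  apply Finset.sum_nonneg
  intro t _
  rw [Complex.mul_conj]
  exact_mod_cast Complex.normSq_nonneg (d t)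

lemma freq_nonneg (a b : ℝ) (γ : ℤ → ℝ)
    (h0 : γ 0 = 1)
    (h1 : ∀ k : ℤ, |k| = 1 → γ k = a)
    (h2 : ∀ k : ℤ, |k| = 2 → γ k = b)
    (h3 : ∀ k : ℤ, 3 ≤ |k| → γ k = 0)
    (hPD : ∀ (m : ℕ) (c : Fin (m + 1) → ℂ),
        0 ≤ ∑ k : Fin (m + 1), ∑ l : Fin (m + 1),
          c k * (starRingEnd ℂ) (c l) * (γ (((k : ℕ) : ℤ) - ((l : ℕ) : ℤ)) : ℂ))
    (θ : ℝ) : 0 ≤ 1 + 2 * a * Real.cos θ + 2 * b * Real.cos (2 * θ) := by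
  obtain ⟨F, hFdef⟩ : ∃ F : ℤ → ℂ, F = fun (n : ℤ) =>
      Complex.exp ((n : ℂ) * (θ : ℂ) * Complex.I) * ((γ n : ℝ) : ℂ) := ⟨_, rfl⟩
  have hF3 : ∀ j : ℤ, 3 ≤ |j| → F j = 0 := by
    intro j hj; simp [hFdef, h3 j hj]
  have hF0 : F 0 = 1 := by simp [hFdef, h0]
  have hu : F 1 + F (-1) = ((2 * a * Real.cos θ : ℝ) : ℂ) := by
    simp only [hFdef]
    rw [h1 1 (by decide), h1 (-1) (by decide)]
    push_cast
    have := Complex.two_cos (x := (θ : ℂ))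
    ring_nf
    ring_nf at this
    linear_combination (-(a : ℂ)) * this
  have hv : F 2 + F (-2) = ((2 * b * Real.cos (2 * θ) : ℝ) : ℂ) := by
    simp only [hFdef]
    rw [h2 2 (by decide), h2 (-2) (by decide)]
    push_cast
    have := Complex.two_cos (x := 2 * (θ : ℂ))
    ring_nf
    ring_nf at this
    linear_combination (-(b : ℂ)) * this
  -- row and column sums
  have hrow : ∀ N : ℕ, 2 ≤ N →
      ∑ t ∈ Finset.range (N + 1), F ((N : ℤ) - t) = F 2 + F 1 + F 0 := by
    intro N hN
    have hsub : (Finset.range 3).image (fun j => (N - 2) + j) ⊆ Finset.range (N + 1) := by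
      intro t ht; simp only [Finset.mem_image, Finset.mem_range] at ht ⊢; omega
    rw [← Finset.sum_subset hsub (by
      intro t ht htn
      simp only [Finset.mem_image, Finset.mem_range] at ht htn
      apply hF3
      rw [abs_of_nonneg (by omega : (0:ℤ) ≤ (N : ℤ) - t)]
      have h0' : ¬ (N - 2 + 0 = t) := fun h => htn ⟨0, by omega, h⟩
      have h1' : ¬ (N - 2 + 1 = t) := fun h => htn ⟨1, by omega, h⟩
      have h2' : ¬ (N - 2 + 2 = t) := fun h => htn ⟨2, by omega, h⟩
      omega)]
    rw [Finset.sum_image (by intro x _ y _ h; simp only at h; omega)]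
    rw [Finset.sum_range_succ, Finset.sum_range_succ, Finset.sum_range_one,
      show (N : ℤ) - ((N - 2 + 0 : ℕ) : ℤ) = 2 by omega,
      show (N : ℤ) - ((N - 2 + 1 : ℕ) : ℤ) = 1 by omega,
      show (N : ℤ) - ((N - 2 + 2 : ℕ) : ℤ) = 0 by omega]
  have hcol : ∀ N : ℕ, 2 ≤ N →
      ∑ t ∈ Finset.range N, F ((t : ℤ) - N) = F (-2) + F (-1) := by
    intro N hN
    have hsub : (Finset.range 2).image (fun j => (N - 2) + j) ⊆ Finset.range N := by
      intro t ht; simp only [Finset.mem_image, Finset.mem_range] at ht ⊢; omega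
    rw [← Finset.sum_subset hsub (by
      intro t ht htn
      simp only [Finset.mem_image, Finset.mem_range] at ht htn
      apply hF3
      have h0' : ¬ (N - 2 + 0 = t) := fun h => htn ⟨0, by omega, h⟩
      have h1' : ¬ (N - 2 + 1 = t) := fun h => htn ⟨1, by omega, h⟩
      rw [abs_of_nonpos (by omega : (t:ℤ) - N ≤ 0)]
      omega)]
    rw [Finset.sum_image (by intro x _ y _ h; simp only at h; omega)]
    rw [Finset.sum_range_succ, Finset.sum_range_one,
      show ((N - 2 + 0 : ℕ) : ℤ) - N = -2 by omega,
      show ((N - 2 + 1 : ℕ) : ℤ) - N = -1 by omega]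
  -- closed form by induction
  have hS : ∀ m : ℕ, ∑ k ∈ Finset.range (m + 2), ∑ l ∈ Finset.range (m + 2), F ((k : ℤ) - l)
      = ((m : ℂ) + 2) + ((m : ℂ) + 1) * (F 1 + F (-1)) + (m : ℂ) * (F 2 + F (-2)) := by
    intro m
    induction m with
    | zero =>
      simp only [Finset.sum_range_succ, Finset.sum_range_one]
      norm_num [hF0]
      ring
    | succ n ih =>
      have hstep : ∑ k ∈ Finset.range (n + 3), ∑ l ∈ Finset.range (n + 3), F ((k : ℤ) - l)
          = (∑ k ∈ Finset.range (n + 2), ∑ l ∈ Finset.range (n + 2), F ((k : ℤ) - l))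
            + (∑ k ∈ Finset.range (n + 2), F ((k : ℤ) - ((n + 2 : ℕ) : ℤ)))
            + (∑ l ∈ Finset.range (n + 3), F (((n + 2 : ℕ) : ℤ) - l)) := by
        rw [Finset.sum_range_succ (n := n + 2)]
        congr 1
        rw [← Finset.sum_add_distrib]
        refine Finset.sum_congr rfl fun k _ => ?_
        rw [Finset.sum_range_succ]
      rw [hstep, ih]
      have hc := hcol (n + 2) (by omega)
      have hr := hrow (n + 2) (by omega)
      push_cast at hc hr ⊢
      rw [hc, hr, hF0]
      ring
  -- extract the real inequality
  have hR : ∀ m : ℕ, 0 ≤ (m + 3 : ℝ) + ((m : ℝ) + 2) * (2 * a * Real.cos θ)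
      + ((m : ℝ) + 1) * (2 * b * Real.cos (2 * θ)) := by
    intro m
    have hpd := hPD (m + 2) (fun k => Complex.exp (((k : ℕ) : ℂ) * θ * Complex.I))
    have hterm : ∀ k l : Fin (m + 3),
        Complex.exp (((k : ℕ) : ℂ) * θ * Complex.I)
          * (starRingEnd ℂ) (Complex.exp (((l : ℕ) : ℂ) * θ * Complex.I))
          * (γ (((k : ℕ) : ℤ) - ((l : ℕ) : ℤ)) : ℂ)
        = F (((k : ℕ) : ℤ) - ((l : ℕ) : ℤ)) := by
      intro k l
      rw [hFdef, ← Complex.exp_conj]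
      simp only [map_mul, Complex.conj_I, Complex.conj_ofReal, map_natCast]
      rw [← Complex.exp_add]
      congr 2
      push_cast
      ring
    rw [show ((m : ℕ) + 2 + 1) = m + 3 from rfl] at hpd
    rw [Finset.sum_congr rfl (fun k _ => Finset.sum_congr rfl (fun l _ => hterm k l))] at hpd
    have hconv : (∑ k : Fin (m + 3), ∑ l : Fin (m + 3), F (((k : ℕ) : ℤ) - ((l : ℕ) : ℤ)))
        = ∑ k ∈ Finset.range (m + 3), ∑ l ∈ Finset.range (m + 3), F ((k : ℤ) - (l : ℤ)) := by
      rw [Fin.sum_univ_eq_sum_range fun k : ℕ => ∑ l : Fin (m + 3), F ((k : ℤ) - ((l : ℕ) : ℤ))]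
      exact Finset.sum_congr rfl fun k _ =>
        Fin.sum_univ_eq_sum_range (fun l : ℕ => F ((k : ℤ) - (l : ℤ))) _
    rw [hconv, show m + 3 = (m + 1) + 2 from rfl, hS (m + 1), hu, hv] at hpd
    have heq : (((m + 1 : ℕ) : ℂ) + 2) + (((m + 1 : ℕ) : ℂ) + 1) * ((2 * a * Real.cos θ : ℝ) : ℂ)
        + ((m + 1 : ℕ) : ℂ) * ((2 * b * Real.cos (2 * θ) : ℝ) : ℂ)
        = (((m + 3 : ℝ) + ((m : ℝ) + 2) * (2 * a * Real.cos θ)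
            + ((m : ℝ) + 1) * (2 * b * Real.cos (2 * θ)) : ℝ) : ℂ) := by
      push_cast
      ring
    rw [heq] at hpd
    exact Complex.zero_le_real.mp hpd
  -- conclude
  by_contra hneg
  push_neg at hneg
  set f : ℝ := 1 + 2 * a * Real.cos θ + 2 * b * Real.cos (2 * θ) with hfdef
  obtain ⟨M, hM⟩ := exists_nat_gt ((3 + 4 * a * Real.cos θ + 2 * b * Real.cos (2*θ)) / (-f))
  have hRM := hR M
  have hMf : (3 + 4 * a * Real.cos θ + 2 * b * Real.cos (2*θ)) < M * (-f) := by
    rw [div_lt_iff₀ (by linarith)] at hM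
    linarith
  rw [hfdef] at hMf
  nlinarith

/-- The covariance function `γ` with `γ(0)=1`, `γ(±1)=a`, `γ(±2)=b`,
`γ(k)=0` for `|k| ≥ 3` is positive definite iff `(a,b) ∈ 𝒫 = 𝒫₁ ∪ 𝒫₂`. -/
theorem stmt_0 (a b : ℝ) (γ : ℤ → ℝ)
    (h0 : γ 0 = 1)
    (h1 : ∀ k : ℤ, |k| = 1 → γ k = a)
    (h2 : ∀ k : ℤ, |k| = 2 → γ k = b)
    (h3 : ∀ k : ℤ, 3 ≤ |k| → γ k = 0) :
    (∀ (m : ℕ) (c : Fin (m + 1) → ℂ),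
        0 ≤ ∑ k : Fin (m + 1), ∑ l : Fin (m + 1),
          c k * (starRingEnd ℂ) (c l) * (γ (((k : ℕ) : ℤ) - ((l : ℕ) : ℤ)) : ℂ))
    ↔ (a ^ 2 / 8 + (b - 1 / 4) ^ 2 ≤ 1 / 16 ∨
        (1 / 16 ≤ a ^ 2 / 8 + (b - 1 / 4) ^ 2 ∧ |a| - 1 / 2 ≤ b ∧ b ≤ 1 / 6)) := by
  constructor
  · intro hPD
    have hf := freq_nonneg a b γ h0 h1 h2 h3 hPD
    have hf0 := hf 0
    have hfpi := hf Real.pi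
    rw [Real.cos_zero, mul_zero, Real.cos_zero] at hf0
    rw [Real.cos_pi, Real.cos_two_pi] at hfpi
    by_cases hell : a ^ 2 / 8 + (b - 1 / 4) ^ 2 ≤ 1 / 16
    · exact Or.inl hell
    · refine Or.inr ⟨(not_le.mp hell).le, ?_, ?_⟩
      · have : |a| ≤ b + 1/2 := abs_le.mpr ⟨by linarith, by linarith⟩
        linarith
      · by_contra hb6
        push_neg at hb6
        have habs : |a| ≤ b + 1/2 := abs_le.mpr ⟨by linarith, by linarith⟩
        have hbpos : (0:ℝ) < b := by linarith
        have h4b : |a| ≤ 4 * b := by linarith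
        obtain ⟨ha1, ha2⟩ := abs_le.mp h4b
        obtain ⟨x, hxdef⟩ : ∃ x : ℝ, x = -a / (4 * b) := ⟨_, rfl⟩
        have hx1 : -1 ≤ x := by
          rw [hxdef, le_div_iff₀ (by linarith : (0:ℝ) < 4 * b)]
          linarith
        have hx2 : x ≤ 1 := by
          rw [hxdef, div_le_one (by linarith : (0:ℝ) < 4 * b)]
          linarith
        have hcx := hf (Real.arccos x)
        rw [Real.cos_two_mul, Real.cos_arccos hx1 hx2] at hcx
        have hid : 1 + 2 * a * x + 2 * b * (2 * x ^ 2 - 1)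
            = (4 * b - 8 * b ^ 2 - a ^ 2) / (4 * b) := by
          rw [hxdef]
          field_simp
          ring
        rw [hid, le_div_iff₀ (by linarith : (0:ℝ) < 4 * b)] at hcx
        apply hell
        nlinarith [hcx]
  · intro hreg m c
    obtain ⟨q0, q1, q2, hq, ha, hb⟩ := exists_q a b hreg
    exact forward_dir a b γ h0 h1 h2 h3 q0 q1 q2 hq ha hb m c
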